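/- Let S ⊆ ℕ be a numerical semigroup and s ∈ S. Suppose the numerical semigroup algebra κ[[u^S]]/κ[[u^s]] is flat and rectangular with a non-singular rectangle, in the following combinatorial sense: the minimal monomial exponents s₁, ..., sₙ (minimal nonzero Apéry numbers of S with respect to sℕ under the division order) satisfy that Ap(S, sℕ) = {ℓ₁s₁ + ⋯ + ℓₙsₙ : 0 ≤ ℓᵢ < βᵢ} with all these sums distinct, every element of S is uniquely s·ℕ + Apéry, and the associated n×n matrix B (with Bᵢᵢ = βᵢ, Bᵢⱼ = -βᵢⱼ where βᵢsᵢ = Σⱼ βᵢⱼsⱼ + tᵢ with tᵢ ∈ sℕ, 0 ≤ βᵢⱼ < βⱼ) is invertible. Then the defining ideal of S, i.e., the kernel of the surjection κ[X₀, Y₁, ..., Yₙ] → κ[u^S] sending X₀ ↦ u^s, Yᵢ ↦ u^{sᵢ}, is generated by the n binomials Yᵢ^{βᵢ} - X₀^{tᵢ/s} ∏ⱼ Yⱼ^{βᵢⱼ}. -/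

import Mathlib

/-- The Apéry set of `S'` with respect to `S`. -/
def apery (S' S : Set ℕ) : Set ℕ :=
  {w | w ∈ S' ∧ ∀ s ∈ S, s ≠ 0 → ∀ w' ∈ S', w ≠ s + w'}

lemma aux_v (n : ℕ) (β : Fin n → ℕ) (βo : Fin n → Fin n → ℕ)
    (hβoii : ∀ i, βo i i = 0)
    (hns : (Matrix.of fun i j : Fin n =>
      if i = j then (β i : ℚ) else -(βo i j : ℚ)).det ≠ 0) :
    ∃ (v : Fin n → ℤ) (D : ℤ), 1 ≤ D ∧
      ∀ i, (β i : ℤ) * v i = (∑ j, (βo i j : ℤ) * v j) + D := by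
  classical
  set Bz : Matrix (Fin n) (Fin n) ℤ :=
    Matrix.of (fun i j => if i = j then (β i : ℤ) else -(βo i j : ℤ)) with hBz
  have hdetz : Bz.det ≠ 0 := by
    intro h
    apply hns
    have hmap : (Matrix.of fun i j : Fin n =>
        if i = j then (β i : ℚ) else -(βo i j : ℚ)) = (Int.castRingHom ℚ).mapMatrix Bz := by
      ext i j
      simp only [hBz, RingHom.mapMatrix_apply, Matrix.map_apply, Matrix.of_apply]
      split <;> simp
    rw [hmap, ← RingHom.map_det, h]
    simp
  set v0 : Fin n → ℤ := Bz.cramer 1 with hv0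
  set v : Fin n → ℤ := if 0 < Bz.det then v0 else -v0 with hv
  have hD1 : 1 ≤ (Bz.det.natAbs : ℤ) := by
    have := Int.natAbs_pos.mpr hdetz
    omega
  have hBv : ∀ i, ∑ j, Bz i j * v j = (Bz.det.natAbs : ℤ) := by
    intro i
    have h0 : ∑ j, Bz i j * v0 j = Bz.det := by
      have h := congrFun (Matrix.mulVec_cramer Bz (1 : Fin n → ℤ)) i
      simpa [Matrix.mulVec, dotProduct, hv0] using h
    rcases lt_or_ge 0 Bz.det with h | h
    · rw [hv]
      simp only [if_pos h]
      rw [h0]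
      omega
    · rw [hv]
      simp only [if_neg (not_lt.2 h)]
      have : ∑ j, Bz i j * (-v0) j = -∑ j, Bz i j * v0 j := by
        simp [mul_neg]
      rw [this, h0]
      omega
  refine ⟨v, (Bz.det.natAbs : ℤ), hD1, ?_⟩
  intro i
  have h1 : ∀ j, Bz i j * v j = (if i = j then (β i : ℤ) * v i else 0) - (βo i j : ℤ) * v j := by
    intro j
    rcases eq_or_ne i j with rfl | hne
    · simp [hBz, hβoii i]
    · simp [hBz, hne]
  have h2 := hBv i
  rw [Finset.sum_congr rfl (fun j _ => h1 j), Finset.sum_sub_distrib, Finset.sum_ite_eq] at h2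
  simp only [Finset.mem_univ, if_pos] at h2
  linarith


open MvPolynomial in
lemma aux_reduce {κ : Type*} [Field κ] (n s : ℕ) (sg β βl : Fin n → ℕ)
    (βo : Fin n → Fin n → ℕ)
    (hsg1 : ∀ j, 1 ≤ sg j)
    (hrel : ∀ i, β i * sg i = (∑ j, βo i j * sg j) + βl i * s)
    (v : Fin n → ℤ) (D : ℤ) (hD1 : 1 ≤ D)
    (hvkey : ∀ i, (β i : ℤ) * v i = (∑ j, (βo i j : ℤ) * v j) + D)
    (a : ℕ) (c : Fin n → ℕ) :
    ∃ (a' : ℕ) (ℓ : Fin n → ℕ), (∀ j, ℓ j < β j) ∧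
      ((X 0 : MvPolynomial (Fin (n + 1)) κ) ^ a * ∏ j, X j.succ ^ c j)
        - (X 0 ^ a' * ∏ j, X j.succ ^ ℓ j)
        ∈ Ideal.span (Set.range fun i : Fin n =>
            (X i.succ : MvPolynomial (Fin (n + 1)) κ) ^ β i
              - X 0 ^ βl i * ∏ j, X j.succ ^ βo i j) := by
  classical
  set I := Ideal.span (Set.range fun i : Fin n =>
      (X i.succ : MvPolynomial (Fin (n + 1)) κ) ^ β i
        - X 0 ^ βl i * ∏ j, X j.succ ^ βo i j) with hI
  set V : ℤ := ∑ j, ((v j).natAbs : ℤ) with hV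
  set μ : ℕ → (Fin n → ℕ) → ℕ := fun a c =>
    ((∑ j, (c j : ℤ) * v j) + ((a * s + ∑ j, c j * sg j : ℕ) : ℤ) * V).toNat with hμ
  -- nonnegativity of the integer expression
  have hμnn : ∀ (a : ℕ) (c : Fin n → ℕ),
      (0 : ℤ) ≤ (∑ j, (c j : ℤ) * v j) + ((a * s + ∑ j, c j * sg j : ℕ) : ℤ) * V := by
    intro a c
    have hcb : ∀ j, (c j : ℤ) ≤ ((a * s + ∑ j', c j' * sg j' : ℕ) : ℤ) := by
      intro j
      have h : c j ≤ a * s + ∑ j', c j' * sg j' := by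
        calc c j ≤ c j * sg j := Nat.le_mul_of_pos_right _ (hsg1 j)
          _ ≤ ∑ j', c j' * sg j' :=
            Finset.single_le_sum (f := fun j' => c j' * sg j') (fun _ _ => Nat.zero_le _)
              (Finset.mem_univ j)
          _ ≤ _ := Nat.le_add_left _ _
      exact_mod_cast h
    have hterm : ∀ j ∈ Finset.univ,
        -(((a * s + ∑ j', c j' * sg j' : ℕ) : ℤ) * ((v j).natAbs : ℤ)) ≤ (c j : ℤ) * v j := by
      intro j _
      have h1 := hcb j
      have h2 : -((v j).natAbs : ℤ) ≤ v j := by omega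
      have h3 : v j ≤ ((v j).natAbs : ℤ) := by omega
      have h0 : (0 : ℤ) ≤ (c j : ℤ) := Int.ofNat_nonneg _
      nlinarith
    have hsum := Finset.sum_le_sum hterm
    have heq : ∑ j, -(((a * s + ∑ j', c j' * sg j' : ℕ) : ℤ) * ((v j).natAbs : ℤ))
        = -(((a * s + ∑ j', c j' * sg j' : ℕ) : ℤ) * V) := by
      rw [hV, Finset.mul_sum, ← Finset.sum_neg_distrib]
    rw [heq] at hsum
    linarith
  suffices H : ∀ (N a : ℕ) (c : Fin n → ℕ), μ a c < N →
      ∃ (a' : ℕ) (ℓ : Fin n → ℕ), (∀ j, ℓ j < β j) ∧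
        ((X 0 : MvPolynomial (Fin (n + 1)) κ) ^ a * ∏ j, X j.succ ^ c j)
          - (X 0 ^ a' * ∏ j, X j.succ ^ ℓ j) ∈ I by
    exact H (μ a c + 1) a c (Nat.lt_succ_self _)
  intro N
  induction N with
  | zero => intro a c h; omega
  | succ N ih =>
    intro a c hμc
    by_cases hnorm : ∀ j, c j < β j
    · exact ⟨a, c, hnorm, by simp⟩
    push_neg at hnorm
    obtain ⟨i, hi⟩ := hnorm
    set d : Fin n → ℕ := fun j => c j - (if j = i then β i else 0) with hd
    set c' : Fin n → ℕ := fun j => d j + βo i j with hc'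
    have hdc : ∀ j, d j + (if j = i then β i else 0) = c j := by
      intro j
      rw [hd]
      dsimp only
      split <;> rename_i h
      · subst h; omega
      · omega
    -- polynomial rewrite step
    have hmulp : ∀ (e f : Fin n → ℕ),
        (∏ j, (X j.succ : MvPolynomial (Fin (n + 1)) κ) ^ e j) * (∏ j, X j.succ ^ f j)
          = ∏ j, X j.succ ^ (e j + f j) := by
      intro e f
      rw [← Finset.prod_mul_distrib]
      exact Finset.prod_congr rfl fun j _ => (pow_add _ _ _).symm
    have hXi : (X i.succ : MvPolynomial (Fin (n + 1)) κ) ^ β i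
        = ∏ j, X j.succ ^ (if j = i then β i else 0) := by
      simp only [pow_ite, pow_zero]
      rw [Finset.prod_ite_eq']
      simp
    have e1 : (∏ j, (X j.succ : MvPolynomial (Fin (n + 1)) κ) ^ c j)
        = (∏ j, X j.succ ^ d j) * X i.succ ^ β i := by
      rw [hXi, hmulp]
      exact Finset.prod_congr rfl fun j _ => by rw [hdc j]
    have e2 : (∏ j, (X j.succ : MvPolynomial (Fin (n + 1)) κ) ^ c' j)
        = (∏ j, X j.succ ^ d j) * ∏ j, X j.succ ^ βo i j := (hmulp d (βo i)).symm
    have hstep : ((X 0 : MvPolynomial (Fin (n + 1)) κ) ^ a * ∏ j, X j.succ ^ c j)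
        - (X 0 ^ (a + βl i) * ∏ j, X j.succ ^ c' j) ∈ I := by
      have key : ((X 0 : MvPolynomial (Fin (n + 1)) κ) ^ a * ∏ j, X j.succ ^ c j)
          - (X 0 ^ (a + βl i) * ∏ j, X j.succ ^ c' j)
          = (X 0 ^ a * ∏ j, X j.succ ^ d j) *
            ((X i.succ : MvPolynomial (Fin (n + 1)) κ) ^ β i
              - X 0 ^ βl i * ∏ j, X j.succ ^ βo i j) := by
        rw [e1, e2, pow_add]
        ring
      rw [key, hI]
      exact Ideal.mul_mem_left _ _ (Ideal.subset_span ⟨i, rfl⟩)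
    -- weight bookkeeping
    have hitesum : ∑ j, (if j = i then β i else 0) * sg j = β i * sg i := by
      simp only [ite_mul, zero_mul]
      rw [Finset.sum_ite_eq']
      simp
    have hsum1 : ∑ j, c' j * sg j + β i * sg i = ∑ j, c j * sg j + ∑ j, βo i j * sg j := by
      have hpt : ∀ j, c' j * sg j + (if j = i then β i else 0) * sg j
          = c j * sg j + βo i j * sg j := by
        intro j
        have h := hdc j
        have h2 : c' j + (if j = i then β i else 0) = c j + βo i j := by
          rw [hc']; dsimp only; omega
        calc c' j * sg j + (if j = i then β i else 0) * sg j
            = (c' j + (if j = i then β i else 0)) * sg j := (add_mul _ _ _).symm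
          _ = (c j + βo i j) * sg j := by rw [h2]
          _ = c j * sg j + βo i j * sg j := add_mul _ _ _
      calc ∑ j, c' j * sg j + β i * sg i
          = ∑ j, (c' j * sg j + (if j = i then β i else 0) * sg j) := by
            rw [Finset.sum_add_distrib, hitesum]
        _ = ∑ j, (c j * sg j + βo i j * sg j) := Finset.sum_congr rfl fun j _ => hpt j
        _ = _ := Finset.sum_add_distrib
    have hweight : (a + βl i) * s + ∑ j, c' j * sg j = a * s + ∑ j, c j * sg j := by
      have h1 := hrel i
      rw [add_mul]
      linarith
    have hitesum2 : ∑ j, (if j = i then (β i : ℤ) else 0) * v j = (β i : ℤ) * v i := by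
      simp only [ite_mul, zero_mul]
      rw [Finset.sum_ite_eq']
      simp
    have hsum2 : ∑ j, (c' j : ℤ) * v j = ∑ j, (c j : ℤ) * v j - D := by
      have hpt : ∀ j, (c' j : ℤ) * v j + (if j = i then (β i : ℤ) else 0) * v j
          = (c j : ℤ) * v j + (βo i j : ℤ) * v j := by
        intro j
        have h3 : (c' j : ℤ) + (if j = i then (β i : ℤ) else 0) = (c j : ℤ) + (βo i j : ℤ) := by
          have h := hdc j
          have h4 : c' j = d j + βo i j := rfl
          split <;> rename_i hji
          · rw [if_pos hji] at h
            omega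
          · rw [if_neg hji] at h
            omega
        calc (c' j : ℤ) * v j + (if j = i then (β i : ℤ) else 0) * v j
            = ((c' j : ℤ) + (if j = i then (β i : ℤ) else 0)) * v j := (add_mul _ _ _).symm
          _ = ((c j : ℤ) + (βo i j : ℤ)) * v j := by rw [h3]
          _ = (c j : ℤ) * v j + (βo i j : ℤ) * v j := add_mul _ _ _
      have hkey := hvkey i
      calc ∑ j, (c' j : ℤ) * v j
          = ∑ j, ((c' j : ℤ) * v j + (if j = i then (β i : ℤ) else 0) * v j)
            - (β i : ℤ) * v i := by
            rw [Finset.sum_add_distrib, hitesum2]; ring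
        _ = ∑ j, ((c j : ℤ) * v j + (βo i j : ℤ) * v j) - (β i : ℤ) * v i := by
            rw [Finset.sum_congr rfl fun j _ => hpt j]
        _ = ∑ j, (c j : ℤ) * v j + ∑ j, (βo i j : ℤ) * v j - (β i : ℤ) * v i := by
            rw [Finset.sum_add_distrib]
        _ = _ := by rw [hkey]; ring
    have hdec : μ (a + βl i) c' < μ a c := by
      have h1 := hμnn (a + βl i) c'
      have h2 := hμnn a c
      rw [hμ]
      dsimp only
      rw [hweight] at h1 ⊢
      rw [hsum2] at h1 ⊢
      have hb : (0 : ℤ) < ∑ j, (c j : ℤ) * v j + ((a * s + ∑ j, c j * sg j : ℕ) : ℤ) * V := by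
        linarith
      rw [Int.toNat_lt_toNat hb]
      linarith
    have hrec := ih (a + βl i) c' (by omega)
    obtain ⟨a', ℓ, hℓ, hmem⟩ := hrec
    refine ⟨a', ℓ, hℓ, ?_⟩
    have h := Ideal.add_mem _ hstep hmem
    rwa [sub_add_sub_cancel] at h


open MvPolynomial in
lemma aux_mon_prod {κ : Type*} [Field κ] (n : ℕ) (m : Fin (n + 1) →₀ ℕ) (cc : κ) :
    MvPolynomial.monomial m cc
      = MvPolynomial.C cc * ((X 0 : MvPolynomial (Fin (n + 1)) κ) ^ m 0
          * ∏ j : Fin n, X j.succ ^ m j.succ) := by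
  rw [monomial_eq, Finsupp.prod_fintype _ _ fun i => pow_zero _, Fin.prod_univ_succ]

open MvPolynomial in
lemma aux_eval_mon {κ : Type*} [Field κ] (n s : ℕ) (sg : Fin n → ℕ)
    (m : Fin (n + 1) →₀ ℕ) (cc : κ) :
    MvPolynomial.aeval
        (Fin.cases (PowerSeries.X ^ s) (fun i => PowerSeries.X ^ sg i) :
          Fin (n + 1) → PowerSeries κ) (MvPolynomial.monomial m cc)
      = PowerSeries.C cc * PowerSeries.X ^ (m 0 * s + ∑ j, m j.succ * sg j) := by
  rw [aeval_monomial, Finsupp.prod_fintype _ _ fun i => pow_zero _, Fin.prod_univ_succ]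
  simp only [Fin.cases_zero, Fin.cases_succ]
  congr 1
  rw [pow_add, ← pow_mul']
  congr 1
  calc ∏ j : Fin n, ((PowerSeries.X : PowerSeries κ) ^ sg j) ^ m j.succ
        = ∏ j : Fin n, (PowerSeries.X : PowerSeries κ) ^ (m j.succ * sg j) :=
        Finset.prod_congr rfl fun j _ => (pow_mul' _ _ _).symm
    _ = _ := Finset.prod_pow_eq_pow_sum _ _ _

open MvPolynomial in
lemma aux_normzero {κ : Type*} [Field κ] (n s : ℕ) (sg β : Fin n → ℕ)
    (hwinj : ∀ m m' : Fin (n + 1) →₀ ℕ, (∀ j, m j.succ < β j) → (∀ j, m' j.succ < β j) →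
      m 0 * s + ∑ j, m j.succ * sg j = m' 0 * s + ∑ j, m' j.succ * sg j → m = m')
    (g : MvPolynomial (Fin (n + 1)) κ)
    (hg : ∀ m ∈ g.support, ∀ j : Fin n, m j.succ < β j)
    (h0 : MvPolynomial.aeval
        (Fin.cases (PowerSeries.X ^ s) (fun i => PowerSeries.X ^ sg i) :
          Fin (n + 1) → PowerSeries κ) g = 0) : g = 0 := by
  classical
  ext m
  rw [MvPolynomial.coeff_zero]
  by_cases hm : m ∈ g.support
  swap
  · exact MvPolynomial.notMem_support_iff.1 hm
  have hsum : MvPolynomial.aeval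
      (Fin.cases (PowerSeries.X ^ s) (fun i => PowerSeries.X ^ sg i) :
        Fin (n + 1) → PowerSeries κ) g
      = ∑ m' ∈ g.support, PowerSeries.C (MvPolynomial.coeff m' g)
          * PowerSeries.X ^ (m' 0 * s + ∑ j, m' j.succ * sg j) := by
    conv_lhs => rw [← MvPolynomial.support_sum_monomial_coeff g]
    rw [map_sum]
    exact Finset.sum_congr rfl fun m' _ => aux_eval_mon n s sg m' _
  have hc : (PowerSeries.coeff (m 0 * s + ∑ j, m j.succ * sg j))
      (∑ m' ∈ g.support, PowerSeries.C (MvPolynomial.coeff m' g)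
        * PowerSeries.X ^ (m' 0 * s + ∑ j, m' j.succ * sg j)) = 0 := by
    rw [← hsum, h0, map_zero]
  rw [map_sum, Finset.sum_eq_single_of_mem m hm ?side] at hc
  case side =>
    intro m' hm' hne
    have hne2 : (m 0 * s + ∑ j, m j.succ * sg j) ≠ (m' 0 * s + ∑ j, m' j.succ * sg j) :=
      fun he => hne (hwinj m' m (hg m' hm') (hg m hm) he.symm)
    simp [PowerSeries.coeff_X_pow, hne2]
  · simpa [PowerSeries.coeff_X_pow] using hc


open MvPolynomial in
/-- Theorem 4.6, absolute case: for a flat rectangular numerical semigroup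
algebra `κ[[u^S]]/κ[[u^s]]` with a non-singular rectangle, the kernel of
`κ[X₀, Y₁, …, Yₙ] → κ[u^S]`, `X₀ ↦ u^s`, `Yᵢ ↦ u^{sᵢ}`, is generated by the `n` binomials
`Yᵢ^{βᵢ} - X₀^{λᵢ} ∏ⱼ Yⱼ^{βᵢⱼ}`. -/

theorem complete_intersection_of_nonsingular_rectangle
    {κ : Type*} [Field κ] (S : AddSubmonoid ℕ) (s : ℕ) (hs : s ∈ S) (hspos : 0 < s)
    (n : ℕ) (sg : Fin n → ℕ) (β βl : Fin n → ℕ) (βo : Fin n → Fin n → ℕ)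
    (hmin : ∀ i, sg i ∈ apery (S : Set ℕ) (AddSubmonoid.closure ({s} : Set ℕ) : Set ℕ) ∧
      sg i ≠ 0 ∧ ∀ w₁ ∈ S, ∀ w₂ ∈ S, sg i = w₁ + w₂ → w₁ = sg i ∨ w₂ = sg i)
    (hrect : apery (S : Set ℕ) (AddSubmonoid.closure ({s} : Set ℕ) : Set ℕ)
      = {x | ∃ ℓ : Fin n → ℕ, (∀ i, ℓ i < β i) ∧ x = ∑ i, ℓ i * sg i})
    (hdist : ∀ ℓ ℓ' : Fin n → ℕ, (∀ i, ℓ i < β i) → (∀ i, ℓ' i < β i) →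
      ∑ i, ℓ i * sg i = ∑ i, ℓ' i * sg i → ℓ = ℓ')
    (hflat : ∀ x ∈ S, ∃! p : ℕ × ℕ,
      p.2 ∈ apery (S : Set ℕ) (AddSubmonoid.closure ({s} : Set ℕ) : Set ℕ) ∧
      x = p.1 * s + p.2)
    (hβo : ∀ i j, βo i j < β j) (hβoii : ∀ i, βo i i = 0)
    (hrel : ∀ i, β i * sg i = (∑ j, βo i j * sg j) + βl i * s)
    (hns : (Matrix.of fun i j : Fin n =>
      if i = j then (β i : ℚ) else -(βo i j : ℚ)).det ≠ 0) :
    RingHom.ker ((MvPolynomial.aeval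
        (Fin.cases (PowerSeries.X ^ s) (fun i => PowerSeries.X ^ sg i) :
          Fin (n + 1) → PowerSeries κ) :
        MvPolynomial (Fin (n + 1)) κ →ₐ[κ] PowerSeries κ).toRingHom)
      = Ideal.span (Set.range fun i : Fin n =>
          (X i.succ : MvPolynomial (Fin (n + 1)) κ) ^ β i
            - X 0 ^ βl i * ∏ j, X j.succ ^ βo i j) := by
  classical
  set F : Fin (n + 1) → PowerSeries κ :=
    (Fin.cases (PowerSeries.X ^ s) (fun i => PowerSeries.X ^ sg i) :
      Fin (n + 1) → PowerSeries κ) with hF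
  set I := Ideal.span (Set.range fun i : Fin n =>
      (X i.succ : MvPolynomial (Fin (n + 1)) κ) ^ β i
        - X 0 ^ βl i * ∏ j, X j.succ ^ βo i j) with hI
  have hsg1 : ∀ j, 1 ≤ sg j := fun j => Nat.one_le_iff_ne_zero.2 (hmin j).2.1
  -- images of the generators vanish
  have hgen_ker : ∀ i, MvPolynomial.aeval F
      ((X i.succ : MvPolynomial (Fin (n + 1)) κ) ^ β i
        - X 0 ^ βl i * ∏ j, X j.succ ^ βo i j) = 0 := by
    intro i
    have h1 : MvPolynomial.aeval F ((X (0 : Fin (n + 1)) : MvPolynomial (Fin (n + 1)) κ) ^ βl i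
        * ∏ j, X j.succ ^ βo i j)
        = PowerSeries.X ^ (βl i * s + ∑ j, βo i j * sg j) := by
      have := aux_eval_mon (κ := κ) n s sg
        (Finsupp.equivFunOnFinite.symm (Fin.cases (βl i) (βo i))) 1
      rw [aux_mon_prod] at this
      simpa [Fin.cases_succ, hF] using this
    rw [map_sub, map_pow, MvPolynomial.aeval_X, h1, hF]
    simp only [Fin.cases_succ]
    rw [← pow_mul', hrel i, add_comm (∑ j, βo i j * sg j), sub_self]
  have hIker : I ≤ RingHom.ker (MvPolynomial.aeval F :
      MvPolynomial (Fin (n + 1)) κ →ₐ[κ] PowerSeries κ).toRingHom := by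
    rw [hI, Ideal.span_le]
    rintro _ ⟨i, rfl⟩
    exact hgen_ker i
  refine le_antisymm ?_ hIker
  -- the integer vector from nonsingularity
  obtain ⟨v, D, hD1, hvkey⟩ := aux_v n β βo hβoii hns
  -- injectivity of weights on normal monomials
  have hwinj : ∀ m m' : Fin (n + 1) →₀ ℕ, (∀ j, m j.succ < β j) → (∀ j, m' j.succ < β j) →
      m 0 * s + ∑ j, m j.succ * sg j = m' 0 * s + ∑ j, m' j.succ * sg j → m = m' := by
    intro m m' h1 h2 heq
    have hap1 : (∑ j, m j.succ * sg j) ∈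
        apery (S : Set ℕ) (AddSubmonoid.closure ({s} : Set ℕ) : Set ℕ) := by
      rw [hrect]; exact ⟨fun j => m j.succ, h1, rfl⟩
    have hap2 : (∑ j, m' j.succ * sg j) ∈
        apery (S : Set ℕ) (AddSubmonoid.closure ({s} : Set ℕ) : Set ℕ) := by
      rw [hrect]; exact ⟨fun j => m' j.succ, h2, rfl⟩
    have hxS : m 0 * s + ∑ j, m j.succ * sg j ∈ S :=
      S.add_mem (by simpa [nsmul_eq_mul] using S.nsmul_mem hs (m 0)) hap1.1
    obtain ⟨p, _, hup⟩ := hflat _ hxS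
    have e1 := hup (m 0, ∑ j, m j.succ * sg j) ⟨hap1, rfl⟩
    have e2 := hup (m' 0, ∑ j, m' j.succ * sg j) ⟨hap2, heq⟩
    have e3 : ((m 0 : ℕ), ∑ j, m j.succ * sg j) = (m' 0, ∑ j, m' j.succ * sg j) :=
      e1.trans e2.symm
    rw [Prod.ext_iff] at e3
    obtain ⟨h0eq, hSeq⟩ := e3
    have hfun : (fun j : Fin n => m j.succ) = fun j : Fin n => m' j.succ :=
      hdist _ _ h1 h2 hSeq
    ext k
    refine Fin.cases ?_ ?_ k
    · exact h0eq
    · exact fun j => congrFun hfun j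
  -- kernel ⊆ I
  intro f hf
  rw [RingHom.mem_ker] at hf
  have hf' : MvPolynomial.aeval F f = 0 := hf
  have hred : ∀ m : Fin (n + 1) →₀ ℕ, ∃ g : MvPolynomial (Fin (n + 1)) κ,
      (∀ m' ∈ g.support, ∀ j : Fin n, m' j.succ < β j) ∧
      (MvPolynomial.monomial m (MvPolynomial.coeff m f) - g) ∈ I := by
    intro m
    obtain ⟨a', ℓ, hℓ, hmem⟩ := aux_reduce (κ := κ) n s sg β βl βo hsg1 hrel v D hD1 hvkey
      (m 0) (fun j => m j.succ)
    set m' : Fin (n + 1) →₀ ℕ := Finsupp.equivFunOnFinite.symm (Fin.cases a' ℓ) with hm'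
    have hm'0 : m' 0 = a' := by simp [hm']
    have hm's : ∀ j : Fin n, m' j.succ = ℓ j := by intro j; simp [hm', Fin.cases_succ]
    refine ⟨MvPolynomial.monomial m' (MvPolynomial.coeff m f), ?_, ?_⟩
    · intro m'' hm'' j
      by_cases hc0 : MvPolynomial.coeff m f = 0
      · simp [MvPolynomial.support_monomial, hc0] at hm''
      · simp only [MvPolynomial.support_monomial, if_neg hc0, Finset.mem_singleton] at hm''
        rw [hm'', hm's j]
        exact hℓ j
    · rw [aux_mon_prod, aux_mon_prod, ← mul_sub]
      rw [hm'0]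
      have hprod : (∏ j : Fin n, (X j.succ : MvPolynomial (Fin (n + 1)) κ) ^ m' j.succ)
          = ∏ j : Fin n, X j.succ ^ ℓ j :=
        Finset.prod_congr rfl fun j _ => by rw [hm's j]
      rw [hprod, hI]
      exact Ideal.mul_mem_left _ _ hmem
  choose gm hgm1 hgm2 using hred
  set g : MvPolynomial (Fin (n + 1)) κ := ∑ m ∈ f.support, gm m with hg
  have hfg : f - g ∈ I := by
    have hsplit : f - g = ∑ m ∈ f.support,
        (MvPolynomial.monomial m (MvPolynomial.coeff m f) - gm m) := by
      rw [Finset.sum_sub_distrib, MvPolynomial.support_sum_monomial_coeff]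
    rw [hsplit]
    exact Ideal.sum_mem _ fun m _ => hgm2 m
  have hgsupp : ∀ m' ∈ g.support, ∀ j : Fin n, m' j.succ < β j := by
    intro m' hm' j
    have hsub := MvPolynomial.support_sum (s := f.support) (f := fun m => gm m)
    obtain ⟨m, hmf, hmm⟩ := Finset.mem_biUnion.1 (hsub hm')
    exact hgm1 m m' hmm j
  have hgeval0 : MvPolynomial.aeval F g = 0 := by
    have h1 : MvPolynomial.aeval F (f - g) = 0 := by
      have hmem := hIker hfg
      rwa [RingHom.mem_ker] at hmem
    rw [map_sub, hf', zero_sub, neg_eq_zero] at h1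
    exact h1
  have hg0 : g = 0 := aux_normzero n s sg β hwinj g hgsupp (by rw [← hF]; exact hgeval0)
  rw [hg0, sub_zero] at hfg
  exact hfg
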